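/- Let a > 0 and let f, g : ℝ → ℝ be continuous probability density functions supported in [0, a] with f(a) < g(a). Then there exists K ∈ ℕ such that for all k ≥ K, ∫₀^a x^k f(x) dx < ∫₀^a x^k g(x) dx. -/

import Mathlib

/-- If `f, g` are continuous probability densities supported in `[0, a]`
with `f a < g a`, then the moments of `f` are eventually strictly smaller than the
moments of `g`. -/
theorem endpoint_value_comparison_implies_strict_moment_preference
    (a : ℝ) (ha : 0 < a) (f g : ℝ → ℝ)
    (hfc : ContinuousOn f (Set.Icc 0 a)) (hgc : ContinuousOn g (Set.Icc 0 a))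
    (hf0 : ∀ x, 0 ≤ f x) (hg0 : ∀ x, 0 ≤ g x)
    (hfsupp : ∀ x ∉ Set.Icc 0 a, f x = 0) (hgsupp : ∀ x ∉ Set.Icc 0 a, g x = 0)
    (hfint : ∫ x in (0:ℝ)..a, f x = 1) (hgint : ∫ x in (0:ℝ)..a, g x = 1)
    (hlt : f a < g a) :
    ∃ K : ℕ, ∀ k ≥ K,
      ∫ x in (0:ℝ)..a, x ^ k * f x < ∫ x in (0:ℝ)..a, x ^ k * g x := by
  set c : ℝ := g a - f a with hc_def
  have hc : 0 < c := sub_pos.mpr hlt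
  set h : ℝ → ℝ := fun x => g x - f x with hh_def
  have hhc : ContinuousOn h (Set.Icc 0 a) := hgc.sub hfc
  have haI : a ∈ Set.Icc (0:ℝ) a := Set.right_mem_Icc.mpr ha.le
  -- continuity at a : find δ
  have hcw : ContinuousWithinAt h (Set.Icc 0 a) a := hhc a haI
  rw [Metric.continuousWithinAt_iff] at hcw
  obtain ⟨δ, hδ, hδprop⟩ := hcw (c / 2) (by linarith)
  set b : ℝ := max 0 (a - δ / 2) with hb_def
  have hb0 : 0 ≤ b := le_max_left _ _
  have hba : b < a := by
    rcases max_cases (0:ℝ) (a - δ / 2) with ⟨he, _⟩ | ⟨he, _⟩ <;> rw [hb_def, he] <;> linarith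
  have hhalf : ∀ x ∈ Set.Icc b a, c / 2 ≤ h x := by
    intro x hx
    have hx1 : x ∈ Set.Icc (0:ℝ) a := ⟨le_trans hb0 hx.1, hx.2⟩
    have hd : dist x a < δ := by
      rw [Real.dist_eq, abs_of_nonpos (by linarith [hx.2])]
      have : a - δ / 2 ≤ b := le_max_right _ _
      have := hx.1
      linarith
    have := hδprop hx1 hd
    rw [Real.dist_eq] at this
    have : |h x - h a| < c / 2 := this
    have hha : h a = c := by simp [hh_def, hc_def]
    rw [hha, abs_lt] at this
    linarith [this.1]
  -- bound on |h|
  obtain ⟨C, hC⟩ := IsCompact.exists_bound_of_continuousOn isCompact_Icc hhc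
  have hC0 : 0 ≤ C := le_trans (norm_nonneg _) (hC 0 (Set.left_mem_Icc.mpr ha.le))
  -- ratio
  set r : ℝ := b / a with hr_def
  have hr0 : 0 ≤ r := div_nonneg hb0 ha.le
  have hr1 : r < 1 := (div_lt_one ha).mpr hba
  set ε : ℝ := (c / 2) / (c / 2 + C + 1) with hε_def
  have hε : 0 < ε := div_pos (by linarith) (by linarith)
  have htend : Filter.Tendsto (fun k : ℕ => r ^ (k + 1)) Filter.atTop (nhds 0) := by
    have := tendsto_pow_atTop_nhds_zero_of_lt_one hr0 hr1
    exact this.comp (Filter.tendsto_add_atTop_nat 1)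
  have hev : ∀ᶠ k in Filter.atTop, r ^ (k + 1) < ε := htend.eventually_lt_const hε
  obtain ⟨K, hK⟩ := Filter.eventually_atTop.mp hev
  refine ⟨K, fun k hk => ?_⟩
  have hrk := hK k hk
  -- integrability
  have hcont : ContinuousOn (fun x => x ^ k * h x) (Set.Icc 0 a) :=
    (continuousOn_pow k).mul hhc
  have hsub1 : Set.uIcc (0:ℝ) b ⊆ Set.Icc 0 a := by
    rw [Set.uIcc_of_le hb0]; exact Set.Icc_subset_Icc le_rfl hba.le
  have hsub2 : Set.uIcc b a ⊆ Set.Icc 0 a := by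
    rw [Set.uIcc_of_le hba.le]; exact Set.Icc_subset_Icc hb0 le_rfl
  have hsub3 : Set.uIcc (0:ℝ) a ⊆ Set.Icc 0 a := by
    rw [Set.uIcc_of_le ha.le]
  have hint1 : IntervalIntegrable (fun x => x ^ k * h x) MeasureTheory.volume 0 b :=
    (hcont.mono hsub1).intervalIntegrable
  have hint2 : IntervalIntegrable (fun x => x ^ k * h x) MeasureTheory.volume b a :=
    (hcont.mono hsub2).intervalIntegrable
  have hintf : IntervalIntegrable (fun x => x ^ k * f x) MeasureTheory.volume 0 a :=
    (((continuousOn_pow k).mul hfc).mono hsub3).intervalIntegrable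
  have hintg : IntervalIntegrable (fun x => x ^ k * g x) MeasureTheory.volume 0 a :=
    (((continuousOn_pow k).mul hgc).mono hsub3).intervalIntegrable
  rw [← sub_pos, ← intervalIntegral.integral_sub hintg hintf]
  have heq : (fun x => x ^ k * g x - x ^ k * f x) = fun x => x ^ k * h x := by
    funext x; simp [hh_def]; ring
  rw [show (∫ x in (0:ℝ)..a, (x ^ k * g x - x ^ k * f x)) = ∫ x in (0:ℝ)..a, x ^ k * h x by
    rw [heq]]
  -- split integral
  rw [← intervalIntegral.integral_add_adjacent_intervals hint1 hint2]
  -- bound first piece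
  have hpow : ∀ u v : ℝ, IntervalIntegrable (fun x => x ^ k) MeasureTheory.volume u v :=
    fun u v => (continuous_pow k).intervalIntegrable u v
  have hA : |∫ x in (0:ℝ)..b, x ^ k * h x| ≤ C * (b ^ (k + 1) / (k + 1)) := by
    have h1 : |∫ x in (0:ℝ)..b, x ^ k * h x| ≤ ∫ x in (0:ℝ)..b, |x ^ k * h x| := by
      have := intervalIntegral.norm_integral_le_integral_norm (f := fun x => x ^ k * h x)
        (μ := MeasureTheory.volume) (a := (0:ℝ)) (b := b) hb0
      simpa only [Real.norm_eq_abs] using this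
    have h2 : (∫ x in (0:ℝ)..b, |x ^ k * h x|) ≤ ∫ x in (0:ℝ)..b, C * x ^ k := by
      apply intervalIntegral.integral_mono_on hb0
      · exact (hint1.norm)
      · exact (hpow 0 b).const_mul C
      · intro x hx
        rw [abs_mul, abs_of_nonneg (pow_nonneg hx.1 k)]
        have hxI : x ∈ Set.Icc (0:ℝ) a := ⟨hx.1, le_trans hx.2 hba.le⟩
        have := hC x hxI
        rw [Real.norm_eq_abs] at this
        have hxk : (0:ℝ) ≤ x ^ k := pow_nonneg hx.1 k
        nlinarith [abs_nonneg (h x)]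
    have h3 : (∫ x in (0:ℝ)..b, C * x ^ k) = C * (b ^ (k + 1) / (k + 1)) := by
      rw [intervalIntegral.integral_const_mul, integral_pow]
      try push_cast
      try ring
    linarith
  -- bound second piece
  have hB : (c / 2) * ((a ^ (k + 1) - b ^ (k + 1)) / (k + 1)) ≤ ∫ x in b..a, x ^ k * h x := by
    have h2 : (∫ x in b..a, (c / 2) * x ^ k) ≤ ∫ x in b..a, x ^ k * h x := by
      apply intervalIntegral.integral_mono_on hba.le
      · exact (hpow b a).const_mul _
      · exact hint2
      · intro x hx
        have hx0 : 0 ≤ x := le_trans hb0 hx.1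
        have hxk : (0:ℝ) ≤ x ^ k := pow_nonneg hx0 k
        have := hhalf x hx
        nlinarith
    have h3 : (∫ x in b..a, (c / 2) * x ^ k) = (c / 2) * ((a ^ (k + 1) - b ^ (k + 1)) / (k + 1)) := by
      rw [intervalIntegral.integral_const_mul, integral_pow]
      try push_cast
      try ring
    linarith
  -- arithmetic conclusion
  have hk1 : (0:ℝ) < (k : ℝ) + 1 := by positivity
  have hbr : b = r * a := by rw [hr_def]; exact (div_mul_cancel₀ b ha.ne').symm
  have hbk : b ^ (k + 1) = r ^ (k + 1) * a ^ (k + 1) := by rw [hbr, mul_pow]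
  have hak : (0:ℝ) < a ^ (k + 1) := pow_pos ha _
  have hrknn : (0:ℝ) ≤ r ^ (k + 1) := pow_nonneg hr0 _
  have hkey : C * b ^ (k + 1) < (c / 2) * (a ^ (k + 1) - b ^ (k + 1)) := by
    rw [hbk]
    have hmul : r ^ (k + 1) * (c / 2 + C + 1) < c / 2 := by
      rw [hε_def] at hrk
      calc r ^ (k + 1) * (c / 2 + C + 1)
          < ((c / 2) / (c / 2 + C + 1)) * (c / 2 + C + 1) := by
            apply mul_lt_mul_of_pos_right hrk (by linarith)
        _ = c / 2 := by field_simp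
    nlinarith
  have hAbound : -(C * (b ^ (k + 1) / (k + 1))) ≤ ∫ x in (0:ℝ)..b, x ^ k * h x := by
    have := neg_abs_le (∫ x in (0:ℝ)..b, x ^ k * h x)
    linarith
  have hfinal : C * (b ^ (k + 1) / (k + 1)) < (c / 2) * ((a ^ (k + 1) - b ^ (k + 1)) / (k + 1)) := by
    rw [mul_div_assoc', mul_div_assoc']
    gcongr
  linarith
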